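/- Let F: R^n → R be convex and differentiable with L-Lipschitz gradient, S symmetric positive definite with minimum eigenvalue λ_min(S), s > 0, and define x⁺ = x − s S^{-1}∇F(x). Then for every z ∈ R^n: s F(z) ≥ s F(x⁺) − (1/2)||z − x||_S^2 + (1/2)||z − x⁺||_S^2 + (1/2)(1 − sL/λ_min(S))||x − x⁺||_S^2. -/

import Mathlib

open RealInnerProductSpace

section Aux

variable {n : ℕ}

local notation "E" => EuclideanSpace ℝ (Fin n)

/-- Derivative of the 1-D restriction `t ↦ F (x + t • d)`. -/
lemma line_hasDerivAt (F : E → ℝ) (F' : E → E)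
    (hgrad : ∀ x, HasGradientAt F (F' x) x) (x d : E) (t : ℝ) :
    HasDerivAt (fun t : ℝ => F (x + t • d)) ⟪F' (x + t • d), d⟫ t := by
  have hline : HasDerivAt (fun t : ℝ => x + t • d) d t := by
    simpa using ((hasDerivAt_id t).smul_const d).const_add x
  have hF : HasFDerivAt F (InnerProductSpace.toDual ℝ _ (F' (x + t • d))) (x + t • d) :=
    hasGradientAt_iff_hasFDerivAt.mp (hgrad _)
  have h := hF.comp_hasDerivAt t hline
  simp at h
  exact h

/-- First-order condition for convexity. -/
lemma convex_first_order (F : E → ℝ) (F' : E → E)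
    (hconv : ConvexOn ℝ Set.univ F)
    (hgrad : ∀ x, HasGradientAt F (F' x) x) (x z : E) :
    F x + ⟪F' x, z - x⟫ ≤ F z := by
  set g : ℝ → ℝ := fun t => F (x + t • (z - x)) with hg
  have hgconv : ConvexOn ℝ Set.univ g := by
    have h := hconv.comp_affineMap
      (AffineMap.lineMap x z : ℝ →ᵃ[ℝ] E)
    have heq : g = F ∘ (AffineMap.lineMap x z : ℝ →ᵃ[ℝ] E) := by
      funext t
      simp only [hg, Function.comp_apply]
      congr 1
      rw [AffineMap.lineMap_apply]
      simp only [vadd_eq_add, vsub_eq_sub]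
      module
    rw [heq]
    simpa using h
  have hder : HasDerivAt g ⟪F' x, z - x⟫ 0 := by
    simpa using line_hasDerivAt F F' hgrad x (z - x) 0
  have hslope := hgconv.le_slope_of_hasDerivAt (Set.mem_univ (0 : ℝ)) (Set.mem_univ (1 : ℝ))
    one_pos hder
  have : slope g 0 1 = g 1 - g 0 := by simp [slope_def_field]
  rw [this] at hslope
  have h0 : g 0 = F x := by simp [hg]
  have h1 : g 1 = F z := by simp [hg]
  rw [h0, h1] at hslope
  linarith

/-- Descent lemma for an `L`-Lipschitz gradient. -/
lemma descent_lemma (F : E → ℝ) (F' : E → E)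
    (hgrad : ∀ x, HasGradientAt F (F' x) x)
    (L : ℝ) (hL : 0 < L) (hlip : ∀ u v, ‖F' u - F' v‖ ≤ L * ‖u - v‖)
    (x y : E) :
    F y ≤ F x + ⟪F' x, y - x⟫ + L / 2 * ‖y - x‖ ^ 2 := by
  set d : E := y - x with hd
  set h : ℝ → ℝ := fun t => F (x + t • d) - t * ⟪F' x, d⟫ - L * t ^ 2 / 2 * ‖d‖ ^ 2 with hh
  have hder : ∀ t : ℝ, HasDerivAt h
      (⟪F' (x + t • d), d⟫ - ⟪F' x, d⟫ - L * t * ‖d‖ ^ 2) t := by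
    intro t
    have h1 := line_hasDerivAt F F' hgrad x d t
    have h2 : HasDerivAt (fun t : ℝ => t * ⟪F' x, d⟫) ⟪F' x, d⟫ t := by
      simpa using (hasDerivAt_id t).mul_const ⟪F' x, d⟫
    have h3 : HasDerivAt (fun t : ℝ => L * t ^ 2 / 2 * ‖d‖ ^ 2) (L * t * ‖d‖ ^ 2) t := by
      have : HasDerivAt (fun t : ℝ => t ^ 2) (2 * t) t := by
        simpa using hasDerivAt_pow 2 t
      have := ((this.const_mul L).div_const 2).mul_const (‖d‖ ^ 2)
      rw [show L * t * ‖d‖ ^ 2 = L * (2 * t) / 2 * ‖d‖ ^ 2 by ring]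
      exact this
    exact (h1.sub h2).sub h3
  have hd' : ∀ t : ℝ, t ∈ Set.Icc (0:ℝ) 1 →
      deriv h t ≤ 0 := by
    intro t ht
    rw [(hder t).deriv]
    have hbound : ⟪F' (x + t • d) - F' x, d⟫ ≤ L * t * ‖d‖ ^ 2 := by
      calc ⟪F' (x + t • d) - F' x, d⟫ ≤ ‖F' (x + t • d) - F' x‖ * ‖d‖ :=
            real_inner_le_norm _ _
        _ ≤ (L * ‖(x + t • d) - x‖) * ‖d‖ := by
            have := hlip (x + t • d) x
            exact mul_le_mul_of_nonneg_right this (norm_nonneg _)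
        _ = L * t * ‖d‖ ^ 2 := by
            simp [norm_smul, abs_of_nonneg ht.1]
            ring
    have : ⟪F' (x + t • d), d⟫ - ⟪F' x, d⟫ = ⟪F' (x + t • d) - F' x, d⟫ := by
      rw [inner_sub_left]
    linarith
  have hcont : ContinuousOn h (Set.Icc (0:ℝ) 1) :=
    (fun t _ => (hder t).differentiableAt.continuousAt.continuousWithinAt)
  have hanti : AntitoneOn h (Set.Icc (0:ℝ) 1) := by
    apply antitoneOn_of_deriv_nonpos (convex_Icc 0 1) hcont
    · intro t ht
      exact (hder t).differentiableAt.differentiableWithinAt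
    · intro t ht
      rw [interior_Icc] at ht
      exact hd' t ⟨le_of_lt ht.1, le_of_lt ht.2⟩
  have := hanti (Set.mem_Icc.mpr ⟨le_refl 0, zero_le_one⟩)
    (Set.mem_Icc.mpr ⟨zero_le_one, le_refl 1⟩) zero_le_one
  have h0 : h 0 = F x := by simp [hh]
  have h1 : h 1 = F y - ⟪F' x, d⟫ - L / 2 * ‖d‖ ^ 2 := by
    have : x + (1:ℝ) • d = y := by rw [hd]; module
    simp only [hh, this, one_pow, one_mul, mul_one]
  rw [h0, h1] at this
  linarith

end Aux

/-- Key descent inequality for the gradient step `x⁺ = x - s S⁻¹∇F(x)`: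
for all `z`, `sF(z) ≥ sF(x⁺) - ½‖z-x‖_S² + ½‖z-x⁺‖_S² + ½(1 - sL/λ_min(S))‖x-x⁺‖_S²`. -/
theorem stmt_11 {n : ℕ}
    (F : EuclideanSpace ℝ (Fin n) → ℝ) (F' : EuclideanSpace ℝ (Fin n) → EuclideanSpace ℝ (Fin n))
    (hconv : ConvexOn ℝ Set.univ F)
    (hgrad : ∀ x, HasGradientAt F (F' x) x)
    (L : ℝ) (hL : 0 < L) (hlip : ∀ u v, ‖F' u - F' v‖ ≤ L * ‖u - v‖)
    (S Sinv : EuclideanSpace ℝ (Fin n) →ₗ[ℝ] EuclideanSpace ℝ (Fin n))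
    (hsymm : ∀ x y, ⟪S x, y⟫ = ⟪x, S y⟫)
    (hpos : ∀ x, x ≠ 0 → 0 < ⟪S x, x⟫)
    (hSinv : ∀ x, S (Sinv x) = x)
    (lmin : ℝ) (hlmin : 0 < lmin)
    (hmin : ∀ x, lmin * ‖x‖ ^ 2 ≤ ⟪S x, x⟫)
    (s : ℝ) (hs : 0 < s) :
    ∀ x z : EuclideanSpace ℝ (Fin n),
      s * F (x - s • Sinv (F' x)) - (1/2) * ⟪S (z - x), z - x⟫ +
          (1/2) * ⟪S (z - (x - s • Sinv (F' x))), z - (x - s • Sinv (F' x))⟫ +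
          (1/2) * (1 - s * L / lmin) *
            ⟪S (x - (x - s • Sinv (F' x))), x - (x - s • Sinv (F' x))⟫ ≤
        s * F z := by
  intro x z
  set xp : EuclideanSpace ℝ (Fin n) := x - s • Sinv (F' x) with hxp
  have hux : x - xp = s • Sinv (F' x) := by simp [hxp]
  have hSux : S (x - xp) = s • F' x := by
    rw [hux, map_smul, hSinv]
  -- (1) convexity
  have h1 : F x + ⟪F' x, z - x⟫ ≤ F z := convex_first_order F F' hconv hgrad x z
  -- (2) descent
  have h2 : F xp ≤ F x + ⟪F' x, xp - x⟫ + L / 2 * ‖xp - x‖ ^ 2 :=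
    descent_lemma F F' hgrad L hL hlip x xp
  -- (3) three-point identity
  have habs : ∀ a b : EuclideanSpace ℝ (Fin n), 2 * ⟪S b, a⟫ =
      ⟪S a, a⟫ + ⟪S b, b⟫ - ⟪S (a - b), a - b⟫ := by
    intro a b
    have hsy : ⟪S a, b⟫ = ⟪S b, a⟫ := by
      rw [hsymm a b, real_inner_comm]
    have hexp : ⟪S (a - b), a - b⟫ =
        ⟪S a, a⟫ - ⟪S a, b⟫ - ⟪S b, a⟫ + ⟪S b, b⟫ := by
      rw [map_sub, inner_sub_left, inner_sub_right, inner_sub_right]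
      ring
    rw [hexp, hsy]
    ring
  have h3 : 2 * ⟪S (x - xp), z - xp⟫ =
      ⟪S (z - xp), z - xp⟫ + ⟪S (x - xp), x - xp⟫ - ⟪S (z - x), z - x⟫ := by
    have := habs (z - xp) (x - xp)
    rw [show (z - xp) - (x - xp) = z - x by abel] at this
    linarith
  -- (4)
  have h4 : ⟪S (x - xp), z - xp⟫ = s * ⟪F' x, z - xp⟫ := by
    rw [hSux, real_inner_smul_left]
  -- (5) eigenvalue bound
  have h5 : lmin * ‖x - xp‖ ^ 2 ≤ ⟪S (x - xp), x - xp⟫ := hmin _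
  have hnorm : ‖xp - x‖ = ‖x - xp‖ := by rw [norm_sub_rev]
  -- inner product splittings
  have hsplit : ⟪F' x, z - x⟫ = ⟪F' x, z - xp⟫ + ⟪F' x, xp - x⟫ := by
    rw [show z - x = (z - xp) + (xp - x) by abel, inner_add_right]
  have hQzx : (0:ℝ) ≤ ‖x - xp‖ ^ 2 := by positivity
  -- combine
  have key : s * ⟪F' x, z - xp⟫ =
      (1/2) * (⟪S (z - xp), z - xp⟫ + ⟪S (x - xp), x - xp⟫ - ⟪S (z - x), z - x⟫) := by
    rw [← h4]; linarith
  have h2' : s * F xp ≤ s * F x + s * ⟪F' x, xp - x⟫ + s * (L / 2) * ‖x - xp‖ ^ 2 := by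
    have := mul_le_mul_of_nonneg_left h2 (le_of_lt hs)
    rw [hnorm] at this
    nlinarith
  have h1' : s * F x + s * ⟪F' x, z - x⟫ ≤ s * F z := by
    have := mul_le_mul_of_nonneg_left h1 (le_of_lt hs)
    nlinarith
  have h5' : s * (L / 2) * ‖x - xp‖ ^ 2 ≤ s * L / (2 * lmin) * ⟪S (x - xp), x - xp⟫ := by
    rw [div_mul_eq_mul_div, le_div_iff₀ (by linarith)]
    nlinarith [mul_le_mul_of_nonneg_left h5 (by positivity : (0:ℝ) ≤ s * L)]
  have hdiv : s * L / (2 * lmin) = (1/2) * (s * L / lmin) := by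
    field_simp
  rw [hdiv] at h5'
  have hsplit' : s * ⟪F' x, z - x⟫ =
      s * ⟪F' x, z - xp⟫ + s * ⟪F' x, xp - x⟫ := by rw [hsplit]; ring
  linarith [hsplit', key, h1', h2', h5']
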